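/- (Theorem 2, flip attacks with nominal estimator.) Let ε ∈ {+1, −1} and suppose the attacker applies u^A_{t-1} = −u_{t-1} + ε φ_{t-1} (ε = +1 for a flip before watermark injection, ε = −1 for a flip after injection), the plant evolves as y^A_t = A y^A_{t-1} + B u^A_{t-1} + w_{t-1}, and the estimator under attack is ŷ^A_t = A y^A_{t-1} + B u_{t-1}. Then the residual satisfies the deterministic identity r^A_t = −2 B u_{t-1} + ε B φ_{t-1} + w_{t-1}; consequently, if w_{t-1} has the multivariate Gaussian law N(0, Q) on ℝⁿ, then r^A_t has law N(−2 B u_{t-1} + ε B φ_{t-1}, Q). -/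

import Mathlib

open MeasureTheory ProbabilityTheory Matrix

lemma measurable_mulVec {n k : ℕ} (M : Matrix (Fin n) (Fin k) ℝ) :
    Measurable fun z : Fin k → ℝ => M *ᵥ z :=
  measurable_pi_lambda _ fun i => by
    simpa [Matrix.mulVec, dotProduct] using
      Finset.measurable_sum Finset.univ
        fun j _ => by fun_prop

open Classical in
/-- The multivariate Gaussian measure `N(m, S)` on `ℝⁿ`, defined (for positive
semidefinite `S`) as the pushforward of a product of standard Gaussians under the
affine map `z ↦ m + S^{1/2} z`; junk value `0` if `S` is not positive semidefinite. -/
noncomputable def multivariateGaussian {n : ℕ} (m : Fin n → ℝ)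
    (S : Matrix (Fin n) (Fin n) ℝ) : Measure (Fin n → ℝ) :=
  if h : S.PosSemidef then
    Measure.map (fun z => m + (h.1.eigenvectorUnitary.1 * diagonal (Real.sqrt ∘ h.1.eigenvalues) *
      (star h.1.eigenvectorUnitary : Matrix (Fin n) (Fin n) ℝ)) *ᵥ z) (Measure.pi fun _ : Fin n => gaussianReal 0 1)
  else 0

lemma multivariateGaussian_shift {n : ℕ} (m : Fin n → ℝ)
    (Q : Matrix (Fin n) (Fin n) ℝ) (hQ : Q.PosSemidef) :
    Measure.map (fun x => m + x) (_root_.multivariateGaussian 0 Q)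
      = _root_.multivariateGaussian m Q := by
  simp only [_root_.multivariateGaussian, dif_pos hQ]
  rw [Measure.map_map (measurable_const_add m)
    ((measurable_mulVec (hQ.1.eigenvectorUnitary.1 * diagonal (Real.sqrt ∘ hQ.1.eigenvalues) *
      (star hQ.1.eigenvectorUnitary : Matrix (Fin n) (Fin n) ℝ))).const_add 0)]
  congr 1
  ext z
  simp [Function.comp]

lemma multivariateGaussian_ne_zero {n : ℕ} (m : Fin n → ℝ)
    (Q : Matrix (Fin n) (Fin n) ℝ) (hQ : Q.PosSemidef) :
    _root_.multivariateGaussian m Q ≠ 0 := by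
  simp only [_root_.multivariateGaussian, dif_pos hQ]
  have : IsProbabilityMeasure (Measure.map (fun z => m + (hQ.1.eigenvectorUnitary.1 * diagonal (Real.sqrt ∘ hQ.1.eigenvalues) *
      (star hQ.1.eigenvectorUnitary : Matrix (Fin n) (Fin n) ℝ)) *ᵥ z)
      (Measure.pi fun _ : Fin n => gaussianReal 0 1)) :=
    Measure.isProbabilityMeasure_map
      ((measurable_mulVec (hQ.1.eigenvectorUnitary.1 * diagonal (Real.sqrt ∘ hQ.1.eigenvalues) *
      (star hQ.1.eigenvectorUnitary : Matrix (Fin n) (Fin n) ℝ))).const_add m).aemeasurable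
  exact this.ne_zero _

/-- **Theorem 2: flip attacks with the nominal estimator.**
Let `ε ∈ {+1, −1}` and suppose the attacker applies `u^A_{t-1} = −u_{t-1} + ε φ_{t-1}`,
the plant evolves as `y^A_t = A y^A_{t-1} + B u^A_{t-1} + w_{t-1}`, and the estimator
under attack is `ŷ^A_t = A y^A_{t-1} + B u_{t-1}`. Then
`r^A_t = −2 B u_{t-1} + ε B φ_{t-1} + w_{t-1}`; consequently, if `w_{t-1} ∼ N(0, Q)`,
then `r^A_t ∼ N(−2 B u_{t-1} + ε B φ_{t-1}, Q)`. -/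
theorem flip_attack_nominal_estimator_residual_law
    {n c : ℕ} {Ω : Type*} [MeasurableSpace Ω] (P : Measure Ω)
    (A : Matrix (Fin n) (Fin n) ℝ) (B : Matrix (Fin n) (Fin c) ℝ)
    (Q : Matrix (Fin n) (Fin n) ℝ) (hQ : Q.PosSemidef)
    (ε : ℝ) (hε : ε = 1 ∨ ε = -1)
    (u φ uA : Fin c → ℝ) (huA : uA = -u + ε • φ)
    (yAprev w yA yhatA rA : Ω → Fin n → ℝ)
    (hy : ∀ ω, yA ω = A *ᵥ yAprev ω + B *ᵥ uA + w ω)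
    (hyhat : ∀ ω, yhatA ω = A *ᵥ yAprev ω + B *ᵥ u)
    (hr : ∀ ω, rA ω = yA ω - yhatA ω)
    (hw : Measure.map w P = _root_.multivariateGaussian 0 Q) :
    (∀ ω, rA ω = (-2 : ℝ) • (B *ᵥ u) + ε • (B *ᵥ φ) + w ω) ∧
      Measure.map rA P
        = _root_.multivariateGaussian ((-2 : ℝ) • (B *ᵥ u) + ε • (B *ᵥ φ)) Q := by
  set m : Fin n → ℝ := (-2 : ℝ) • (B *ᵥ u) + ε • (B *ᵥ φ) with hm
  have hid : ∀ ω, rA ω = m + w ω := by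
    intro ω
    rw [hr, hy, hyhat, huA]
    rw [Matrix.mulVec_add, Matrix.mulVec_neg, Matrix.mulVec_smul]
    ext i
    simp [hm]
    ring
  refine ⟨hid, ?_⟩
  have hwae : AEMeasurable w P := by
    by_contra h
    rw [Measure.map_of_not_aemeasurable h] at hw
    exact multivariateGaussian_ne_zero 0 Q hQ hw.symm
  have hrA : rA = (fun x => m + x) ∘ w := by
    funext ω; exact hid ω
  rw [hrA, ← AEMeasurable.map_map_of_aemeasurable
    ((measurable_const_add m).aemeasurable) hwae, hw,
    multivariateGaussian_shift m Q hQ]
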